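/- Let (X,Y) be bivariate normal with mean zero, variances σ₁², σ₂², and correlation ρ ∈ (−1,1). Then the product XY has the variance-gamma distribution VG(0, 1/(σ₁σ₂(1−ρ²)), ρ/(σ₁σ₂(1−ρ²)), 0); equivalently, the density of Z = XY is f_Z(z) = (1/(π σ₁ σ₂ √(1−ρ²))) · exp(ρ z/(σ₁σ₂(1−ρ²))) · K₀(|z|/(σ₁σ₂(1−ρ²))) for z ≠ 0. -/

import Mathlib

open MeasureTheory ProbabilityTheory Real

open Set
open scoped ENNReal

/-- The modified Bessel function of the second kind,
`K_ν(x) = ∫₀^∞ e^{−x cosh t} cosh(νt) dt`. -/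
noncomputable def besselK (ν x : ℝ) : ℝ :=
  ∫ t in Set.Ioi (0 : ℝ), Real.exp (-x * Real.cosh t) * Real.cosh (ν * t)


lemma cosh_ge {t : ℝ} : (1 + t) / 2 ≤ Real.cosh t := by
  rw [Real.cosh_eq]
  have h2 : 0 < Real.exp (-t) := Real.exp_pos _
  linarith [Real.add_one_le_exp t]

lemma integrable_exp_neg_mul_cosh {s : ℝ} (hs : 0 < s) :
    Integrable (fun t : ℝ => Real.exp (-(s * Real.cosh t))) := by
  have hIoi : IntegrableOn (fun t : ℝ => Real.exp (-(s * Real.cosh t))) (Ioi 0) := by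
    have hbd : IntegrableOn (fun t : ℝ => Real.exp (-(s/2)) * Real.exp (-(s/2) * t)) (Ioi 0) :=
      (exp_neg_integrableOn_Ioi 0 (by positivity)).const_mul _
    refine Integrable.mono' hbd ?_ ?_
    · exact ((Real.continuous_exp.comp ((continuous_const.mul Real.continuous_cosh).neg)).aestronglyMeasurable)
    · refine Filter.Eventually.of_forall fun t => ?_
      rw [Real.norm_eq_abs, abs_of_pos (Real.exp_pos _), ← Real.exp_add]
      apply Real.exp_le_exp.mpr
      have := cosh_ge (t := t)
      nlinarith
  have hIic : IntegrableOn (fun t : ℝ => Real.exp (-(s * Real.cosh t))) (Iic 0) := by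
    have A : MeasurableEmbedding fun x : ℝ => -x := (Homeomorph.neg ℝ).measurableEmbedding
    rw [← Measure.map_neg_eq_self (volume : Measure ℝ), A.integrableOn_map_iff]
    simp_rw [Function.comp_def, Real.cosh_neg, neg_preimage, neg_Iic, neg_zero]
    exact Iff.mpr integrableOn_Ici_iff_integrableOn_Ioi hIoi
  rw [← integrableOn_univ, show (univ : Set ℝ) = Iic 0 ∪ Ioi 0 by simp]
  exact hIic.union hIoi

lemma besselK_zero (x : ℝ) :
    besselK 0 x = ∫ t in Set.Ioi (0 : ℝ), Real.exp (-x * Real.cosh t) := by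
  simp [besselK]

set_option maxHeartbeats 1000000 in
lemma lemA {a b : ℝ} (ha : 0 < a) (hb : 0 < b) :
    IntegrableOn (fun x : ℝ => Real.exp (-(a*x^2 + b/x^2)) / x) (Set.Ioi 0) ∧
    ∫ x in Set.Ioi (0:ℝ), Real.exp (-(a*x^2 + b/x^2)) / x
      = besselK 0 (2 * Real.sqrt (a*b)) := by
  set s : ℝ := 2 * Real.sqrt (a*b) with hs_def
  have hs : 0 < s := by positivity
  set r : ℝ := Real.sqrt (Real.sqrt (b/a)) with hr_def
  have hba : 0 < b / a := by positivity
  have hr : 0 < r := Real.sqrt_pos.mpr (Real.sqrt_pos.mpr hba)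
  have hr2 : r^2 = Real.sqrt (b/a) := Real.sq_sqrt (Real.sqrt_nonneg _)
  set φ : ℝ → ℝ := fun t => r * Real.exp (t/2) with hφ_def
  set φ' : ℝ → ℝ := fun t => r * (Real.exp (t/2) * (1/2)) with hφ'_def
  have hderiv : ∀ t ∈ (univ : Set ℝ), HasDerivWithinAt φ (φ' t) univ t := by
    intro t _
    exact (((hasDerivAt_id t).div_const 2).exp.const_mul r).hasDerivWithinAt
  have hinj : InjOn φ univ := by
    intro t1 _ t2 _ h
    have := mul_left_cancel₀ (ne_of_gt hr) h
    have := Real.exp_injective this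
    linarith
  have himg : φ '' univ = Ioi 0 := by
    ext x
    simp only [image_univ, mem_range, mem_Ioi]
    constructor
    · rintro ⟨t, rfl⟩; positivity
    · intro hx
      refine ⟨2 * Real.log (x / r), ?_⟩
      show r * Real.exp (2 * Real.log (x / r) / 2) = x
      rw [show 2 * Real.log (x / r) / 2 = Real.log (x / r) by ring,
        Real.exp_log (div_pos hx hr)]
      field_simp
  have hsa : Real.sqrt a ≠ 0 := by positivity
  have hsb : Real.sqrt b ≠ 0 := by positivity
  have haa : Real.sqrt a * Real.sqrt a = a := Real.mul_self_sqrt ha.le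
  have hbb : Real.sqrt b * Real.sqrt b = b := Real.mul_self_sqrt hb.le
  have sqrt_ab : Real.sqrt (a*b) = Real.sqrt a * Real.sqrt b := Real.sqrt_mul ha.le b
  have hab : Real.sqrt (b/a) = Real.sqrt b / Real.sqrt a := Real.sqrt_div hb.le a
  -- key pointwise identity
  have hkey : ∀ t : ℝ, |φ' t| • (Real.exp (-(a * (φ t)^2 + b / (φ t)^2)) / (φ t))
      = (1/2) * Real.exp (-s * Real.cosh t) := by
    intro t
    have hexp2 : Real.exp (t/2) ^ 2 = Real.exp t := by
      rw [sq, ← Real.exp_add]; ring_nf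
    have hφ2 : (φ t)^2 = Real.sqrt (b/a) * Real.exp t := by
      rw [hφ_def]; simp only []; rw [mul_pow, hr2, hexp2]
    have hA : a * Real.sqrt (b/a) = Real.sqrt (a*b) := by
      rw [hab, sqrt_ab]
      field_simp
      linear_combination (-1:ℝ) * haa
    have hB : b / Real.sqrt (b/a) = Real.sqrt (a*b) := by
      rw [hab, sqrt_ab, div_div_eq_mul_div, div_eq_iff hsb]
      linear_combination (-Real.sqrt a) * hbb
    have h1 : a * (φ t)^2 = Real.sqrt (a*b) * Real.exp t := by
      rw [hφ2, ← mul_assoc, hA]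
    have h2 : b / (φ t)^2 = Real.sqrt (a*b) * Real.exp (-t) := by
      rw [hφ2, div_mul_eq_div_div, hB, Real.exp_neg, div_eq_mul_inv]
    have hexpo : -(a * (φ t)^2 + b / (φ t)^2) = -s * Real.cosh t := by
      rw [h1, h2, Real.cosh_eq, hs_def]; ring
    rw [smul_eq_mul, hexpo]
    rw [hφ'_def, hφ_def]
    simp only []
    rw [abs_of_pos (by positivity)]
    have hE : Real.exp (t/2) ≠ 0 := (Real.exp_pos _).ne'
    field_simp
  have hsubst := integral_image_eq_integral_abs_deriv_smul MeasurableSet.univ hderiv hinj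
      (fun x : ℝ => Real.exp (-(a*x^2 + b/x^2)) / x)
  rw [himg] at hsubst
  have hint_cosh : Integrable (fun t : ℝ => (1/2) * Real.exp (-s * Real.cosh t)) := by
    simpa [neg_mul] using (integrable_exp_neg_mul_cosh hs).const_mul (1/2 : ℝ)
  constructor
  · rw [← himg, integrableOn_image_iff_integrableOn_abs_deriv_smul MeasurableSet.univ hderiv hinj]
    rw [integrableOn_univ]
    exact hint_cosh.congr (Filter.Eventually.of_forall fun t => (hkey t).symm)
  · rw [hsubst, Measure.restrict_univ]
    calc ∫ t : ℝ, |φ' t| • (Real.exp (-(a * (φ t)^2 + b / (φ t)^2)) / (φ t))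
        = ∫ t : ℝ, (1/2) * Real.exp (-s * Real.cosh t) := by
          exact integral_congr_ae (Filter.Eventually.of_forall hkey)
      _ = (1/2) * ∫ t : ℝ, Real.exp (-s * Real.cosh t) := integral_const_mul _ _
      _ = (1/2) * ∫ t : ℝ, (fun u => Real.exp (-s * Real.cosh u)) |t| := by
          congr 1; refine integral_congr_ae (Filter.Eventually.of_forall fun t => ?_)
          simp [Real.cosh_abs]
      _ = (1/2) * (2 * ∫ t in Ioi (0:ℝ), Real.exp (-s * Real.cosh t)) := by
          rw [integral_comp_abs (f := fun u => Real.exp (-s * Real.cosh u))]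
      _ = besselK 0 s := by rw [besselK_zero]; ring

lemma lemB {a b : ℝ} (ha : 0 < a) (hb : 0 < b) :
    ∫⁻ x : ℝ, ENNReal.ofReal (Real.exp (-(a*x^2 + b/x^2)) / |x|)
      = ENNReal.ofReal (2 * besselK 0 (2 * Real.sqrt (a*b))) := by
  obtain ⟨hint, hval⟩ := lemA ha hb
  set H : ℝ → ℝ := fun x => Real.exp (-(a*x^2 + b/x^2)) / |x| with hH_def
  have hHeven : ∀ x : ℝ, H (-x) = H x := by
    intro x; simp only [hH_def, abs_neg, neg_sq]
  have hHIoi : IntegrableOn H (Ioi 0) := by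
    refine hint.congr_fun (fun x hx => ?_) measurableSet_Ioi
    simp only [hH_def, abs_of_pos (mem_Ioi.mp hx)]
  have hHIic : IntegrableOn H (Iic 0) := by
    have A : MeasurableEmbedding fun x : ℝ => -x := (Homeomorph.neg ℝ).measurableEmbedding
    rw [← Measure.map_neg_eq_self (volume : Measure ℝ), A.integrableOn_map_iff]
    have : (H ∘ fun x : ℝ => -x) = H := funext fun x => hHeven x
    rw [this]
    simp only [neg_preimage, neg_Iic, neg_zero]
    exact Iff.mpr integrableOn_Ici_iff_integrableOn_Ioi hHIoi
  have hHint : Integrable H := by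
    rw [← integrableOn_univ, show (univ : Set ℝ) = Iic 0 ∪ Ioi 0 by simp]
    exact hHIic.union hHIoi
  have hHnn : 0 ≤ᵐ[volume] H := Filter.Eventually.of_forall fun x => by
    simp only [hH_def]; positivity
  rw [← ofReal_integral_eq_lintegral_ofReal hHint hHnn]
  congr 1
  have : ∫ x : ℝ, H x = ∫ x : ℝ, (fun u : ℝ => Real.exp (-(a*u^2 + b/u^2)) / u) |x| := by
    refine integral_congr_ae (Filter.Eventually.of_forall fun x => ?_)
    simp only [hH_def, sq_abs]
  rw [this, integral_comp_abs (f := fun u : ℝ => Real.exp (-(a*u^2 + b/u^2)) / u), hval]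

set_option maxHeartbeats 1000000 in
lemma lemC (σ1 σ2 ρ : ℝ) (h1 : 0 < σ1) (h2 : 0 < σ2) (hρ : |ρ| < 1) {z : ℝ} (hz : z ≠ 0) :
    ∫⁻ x : ℝ, ENNReal.ofReal |x⁻¹| * ENNReal.ofReal
        ((1 / (2 * Real.pi * σ1 * σ2 * Real.sqrt (1 - ρ^2))) *
          Real.exp (-(x^2/σ1^2 - 2*ρ*x*(z/x)/(σ1*σ2) + (z/x)^2/σ2^2) / (2*(1 - ρ^2))))
      = ENNReal.ofReal ((1 / (Real.pi * σ1 * σ2 * Real.sqrt (1 - ρ^2))) *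
          Real.exp (ρ * z / (σ1 * σ2 * (1 - ρ^2))) *
          besselK 0 (|z| / (σ1 * σ2 * (1 - ρ^2)))) := by
  have hρ2 : ρ^2 < 1 := by rw [← sq_abs]; nlinarith [abs_nonneg ρ]
  have hτ : 0 < 1 - ρ^2 := by linarith
  have hz2 : 0 < z^2 := by positivity
  have hπ : 0 < Real.pi := Real.pi_pos
  have hst : 0 < Real.sqrt (1 - ρ^2) := Real.sqrt_pos.mpr hτ
  set τ : ℝ := 1 - ρ^2 with hτ_def
  set a : ℝ := 1/(2*σ1^2*τ) with ha_def
  set b : ℝ := z^2/(2*σ2^2*τ) with hb_def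
  have ha : 0 < a := by positivity
  have hb : 0 < b := by positivity
  set c : ℝ := 1 / (2 * Real.pi * σ1 * σ2 * Real.sqrt τ) with hc_def
  have hc : 0 < c := by positivity
  set Eβ : ℝ := ρ * z / (σ1 * σ2 * τ) with hEβ_def
  have h0 : ∀ᵐ x : ℝ, x ≠ (0:ℝ) := by
    refine (ae_iff).mpr ?_
    have : {x : ℝ | ¬ x ≠ 0} = {(0:ℝ)} := by ext x; simp
    rw [this]; exact Real.volume_singleton
  have hmeas : Measurable fun x : ℝ => ENNReal.ofReal (Real.exp (-(a*x^2 + b/x^2)) / |x|) := by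
    apply ENNReal.measurable_ofReal.comp
    apply Measurable.div
    · exact Real.measurable_exp.comp
        (((measurable_const.mul ((measurable_id.pow_const 2))).add
          (measurable_const.div (measurable_id.pow_const 2))).neg)
    · exact measurable_abs
  calc ∫⁻ x : ℝ, ENNReal.ofReal |x⁻¹| * ENNReal.ofReal
        (c * Real.exp (-(x^2/σ1^2 - 2*ρ*x*(z/x)/(σ1*σ2) + (z/x)^2/σ2^2) / (2*τ)))
      = ∫⁻ x : ℝ, ENNReal.ofReal (c * Real.exp Eβ) *
          ENNReal.ofReal (Real.exp (-(a*x^2 + b/x^2)) / |x|) := by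
        refine lintegral_congr_ae (h0.mono fun x hx => ?_)
        dsimp only
        rw [← ENNReal.ofReal_mul (abs_nonneg _), ← ENNReal.ofReal_mul (by positivity)]
        congr 1
        have hM : -(x^2/σ1^2 - 2*ρ*x*(z/x)/(σ1*σ2) + (z/x)^2/σ2^2) / (2*τ)
            = Eβ + (-(a*x^2 + b/x^2)) := by
          rw [hEβ_def, ha_def, hb_def]
          field_simp
          ring
        rw [hM, Real.exp_add, abs_inv]
        ring
    _ = ENNReal.ofReal (c * Real.exp Eβ) *
          ∫⁻ x : ℝ, ENNReal.ofReal (Real.exp (-(a*x^2 + b/x^2)) / |x|) :=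
        lintegral_const_mul _ hmeas
    _ = ENNReal.ofReal (c * Real.exp Eβ) *
          ENNReal.ofReal (2 * besselK 0 (2 * Real.sqrt (a*b))) := by rw [lemB ha hb]
    _ = ENNReal.ofReal ((1 / (Real.pi * σ1 * σ2 * Real.sqrt τ)) *
          Real.exp (ρ * z / (σ1 * σ2 * τ)) * besselK 0 (|z| / (σ1 * σ2 * τ))) := by
        rw [← ENNReal.ofReal_mul (by positivity)]
        congr 1
        have harg : 2 * Real.sqrt (a*b) = |z| / (σ1 * σ2 * τ) := by
          have hab : a * b = (|z|/(2*σ1*σ2*τ))^2 := by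
            rw [ha_def, hb_def, div_pow, sq_abs]
            field_simp
          rw [hab, Real.sqrt_sq (by positivity)]
          field_simp
        have hc2 : c * 2 = 1 / (Real.pi * σ1 * σ2 * Real.sqrt τ) := by
          rw [hc_def]; field_simp
        rw [harg, ← hc2, ← hEβ_def]
        ring

set_option maxHeartbeats 1000000

/-- If `(X, Y)` is bivariate normal with mean zero, variances `σ₁², σ₂²` and
correlation `ρ ∈ (−1, 1)` (given via the joint density), then `Z = XY` has density
`f_Z(z) = (1/(π σ₁ σ₂ √(1−ρ²))) exp(ρz/(σ₁σ₂(1−ρ²))) K₀(|z|/(σ₁σ₂(1−ρ²)))`,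
i.e. `XY ~ VG(0, 1/(σ₁σ₂(1−ρ²)), ρ/(σ₁σ₂(1−ρ²)), 0)`. -/
theorem product_correlated_gaussian_density {Ω : Type*} [MeasurableSpace Ω]
    (μ : Measure Ω) [IsProbabilityMeasure μ]
    (σ1 σ2 ρ : ℝ) (h1 : 0 < σ1) (h2 : 0 < σ2) (hρ : |ρ| < 1)
    (X Y : Ω → ℝ) (hmX : Measurable X) (hmY : Measurable Y)
    (hjoint : Measure.map (fun ω => (X ω, Y ω)) μ =
      (volume : Measure (ℝ × ℝ)).withDensity (fun p => ENNReal.ofReal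
        ((1 / (2 * π * σ1 * σ2 * Real.sqrt (1 - ρ^2))) *
          Real.exp (-(p.1^2/σ1^2 - 2*ρ*p.1*p.2/(σ1*σ2) + p.2^2/σ2^2) / (2*(1 - ρ^2)))))) :
    Measure.map (fun ω => X ω * Y ω) μ =
      volume.withDensity (fun z => ENNReal.ofReal
        ((1 / (π * σ1 * σ2 * Real.sqrt (1 - ρ^2))) *
          Real.exp (ρ * z / (σ1 * σ2 * (1 - ρ^2))) *
          besselK 0 (|z| / (σ1 * σ2 * (1 - ρ^2))))) := by
  have hm : Measurable fun p : ℝ × ℝ => p.1 * p.2 := measurable_fst.mul measurable_snd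
  set f : ℝ × ℝ → ℝ≥0∞ := fun p => ENNReal.ofReal
      ((1 / (2 * π * σ1 * σ2 * Real.sqrt (1 - ρ^2))) *
        Real.exp (-(p.1^2/σ1^2 - 2*ρ*p.1*p.2/(σ1*σ2) + p.2^2/σ2^2) / (2*(1 - ρ^2)))) with hf_def
  set g : ℝ → ℝ≥0∞ := fun z => ENNReal.ofReal
      ((1 / (π * σ1 * σ2 * Real.sqrt (1 - ρ^2))) *
        Real.exp (ρ * z / (σ1 * σ2 * (1 - ρ^2))) *
        besselK 0 (|z| / (σ1 * σ2 * (1 - ρ^2)))) with hg_def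
  have hcont : Continuous fun p : ℝ × ℝ =>
      ((1 / (2 * π * σ1 * σ2 * Real.sqrt (1 - ρ^2))) *
        Real.exp (-(p.1^2/σ1^2 - 2*ρ*p.1*p.2/(σ1*σ2) + p.2^2/σ2^2) / (2*(1 - ρ^2)))) := by
    fun_prop
  have hfm : Measurable f := ENNReal.measurable_ofReal.comp hcont.measurable
  have h0 : ∀ᵐ x : ℝ, x ≠ (0:ℝ) := by
    refine (ae_iff).mpr ?_
    have : {x : ℝ | ¬ x ≠ 0} = {(0:ℝ)} := by ext x; simp
    rw [this]; exact Real.volume_singleton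
  have hcomp : (fun ω => X ω * Y ω) = (fun p : ℝ × ℝ => p.1 * p.2) ∘ (fun ω => (X ω, Y ω)) := rfl
  rw [hcomp, ← Measure.map_map hm (hmX.prodMk hmY), hjoint]
  ext s hs
  rw [Measure.map_apply hm hs, withDensity_apply _ (hm hs), withDensity_apply _ hs]
  rw [← lintegral_indicator (hm hs), ← lintegral_indicator hs]
  set ind : ℝ → ℝ≥0∞ := Set.indicator s (fun _ => 1) with hind_def
  have hindm : Measurable ind := measurable_const.indicator hs
  have hmeas2 : Measurable fun p : ℝ × ℝ =>
      ENNReal.ofReal |p.1⁻¹| * (f (p.1, p.2 / p.1) * ind p.2) := by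
    refine Measurable.mul ?_ (Measurable.mul ?_ (hindm.comp measurable_snd))
    · exact ENNReal.measurable_ofReal.comp (measurable_abs.comp measurable_fst.inv)
    · exact hfm.comp (measurable_fst.prodMk (measurable_snd.div measurable_fst))
  calc ∫⁻ p, ((fun p : ℝ × ℝ => p.1 * p.2) ⁻¹' s).indicator f p
      = ∫⁻ p : ℝ × ℝ, f p * ind (p.1 * p.2) := by
        refine lintegral_congr fun p => ?_
        by_cases hp : p.1 * p.2 ∈ s <;>
          simp [hind_def, Set.indicator, hp, Set.mem_preimage]
    _ = ∫⁻ x : ℝ, ∫⁻ y : ℝ, f (x, y) * ind (x * y) := by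
        have hF : Measurable fun p : ℝ × ℝ => f p * ind (p.1 * p.2) :=
          hfm.mul (hindm.comp hm)
        rw [Measure.volume_eq_prod, lintegral_prod _ hF.aemeasurable]
    _ = ∫⁻ x : ℝ, ∫⁻ w : ℝ, ENNReal.ofReal |x⁻¹| * (f (x, w / x) * ind w) := by
        refine lintegral_congr_ae (h0.mono fun x hx => ?_)
        have hG : Measurable fun w : ℝ => f (x, w / x) * ind w := by
          refine Measurable.mul ?_ hindm
          exact hfm.comp (measurable_const.prodMk (measurable_id.div_const x))
        calc ∫⁻ y : ℝ, f (x, y) * ind (x * y)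
            = ∫⁻ y : ℝ, (fun w : ℝ => f (x, w / x) * ind w) (x * y) := by
              refine lintegral_congr fun y => ?_
              dsimp only
              rw [mul_div_cancel_left₀ _ hx]
          _ = ∫⁻ w : ℝ, f (x, w / x) * ind w ∂(Measure.map (x * ·) volume) :=
              (lintegral_map hG (measurable_const_mul x)).symm
          _ = ENNReal.ofReal |x⁻¹| * ∫⁻ w : ℝ, f (x, w / x) * ind w := by
              rw [Real.map_volume_mul_left hx, lintegral_smul_measure, smul_eq_mul]
          _ = ∫⁻ w : ℝ, ENNReal.ofReal |x⁻¹| * (f (x, w / x) * ind w) :=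
              (lintegral_const_mul _ hG).symm
    _ = ∫⁻ w : ℝ, ∫⁻ x : ℝ, ENNReal.ofReal |x⁻¹| * (f (x, w / x) * ind w) :=
        lintegral_lintegral_swap hmeas2.aemeasurable
    _ = ∫⁻ w : ℝ, (∫⁻ x : ℝ, ENNReal.ofReal |x⁻¹| * f (x, w / x)) * ind w := by
        refine lintegral_congr fun w => ?_
        have hmx : Measurable fun x : ℝ => ENNReal.ofReal |x⁻¹| * f (x, w / x) :=
          (ENNReal.measurable_ofReal.comp
            (measurable_abs.comp measurable_inv)).mul
            (hfm.comp (measurable_id.prodMk (measurable_const.div measurable_id)))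
        rw [← lintegral_mul_const _ hmx]
        exact lintegral_congr fun x => by rw [mul_assoc]
    _ = ∫⁻ w : ℝ, g w * ind w := by
        refine lintegral_congr_ae (h0.mono fun w hw => ?_)
        dsimp only
        have key : (∫⁻ x : ℝ, ENNReal.ofReal |x⁻¹| * f (x, w / x)) = g w := by
          simp only [hf_def, hg_def]
          exact lemC σ1 σ2 ρ h1 h2 hρ hw
        rw [key]
    _ = ∫⁻ w : ℝ, Set.indicator s g w := by
        refine lintegral_congr fun w => ?_
        by_cases hw : w ∈ s <;> simp [hind_def, hw]
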